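/- A ℕ-valued random variable is discrete 1-stable (i.e., t∘ξ' + (1-t)∘ξ'' =_d ξ for all t ∈ [0,1] with independent copies ξ', ξ'') if and only if it is Poisson distributed (with some mean λ ≥ 0). -/

import Mathlib

open scoped ENNReal NNReal
open MeasureTheory ProbabilityTheory

/-- Bernoulli(t) distribution as a `PMF` on `ℕ` (taking values 0 and 1). -/
noncomputable def bernNat (t : ℝ) : PMF ℕ :=
  (PMF.bernoulli (min (Real.toNNReal t) 1) (min_le_right _ _)).map (fun b => if b then 1 else 0)

/-- Distribution of the sum of two independent `ℕ`-valued random variables. -/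
noncomputable def pmfConv (p q : PMF ℕ) : PMF ℕ := p.bind fun a => q.map fun b => a + b

/-- Distribution of the sum of `n` i.i.d. Bernoulli(t) random variables. -/
noncomputable def bernSum (t : ℝ) : ℕ → PMF ℕ
  | 0 => PMF.pure 0
  | n + 1 => pmfConv (bernSum t n) (bernNat t)

/-- Binomial thinning `t ∘ ξ` of a `ℕ`-valued random variable: conditionally on `ξ = n`,
the result is the sum of `n` i.i.d. Bernoulli(t) random variables. -/
noncomputable def pmfThin (t : ℝ) (p : PMF ℕ) : PMF ℕ := p.bind (bernSum t)

/-- Probability generating function `g_ξ(s) = E[s^ξ]`. -/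
noncomputable def pgf (p : PMF ℕ) (s : ℝ) : ℝ := ∑' n : ℕ, (p n).toReal * s ^ n

noncomputable def pgfE (p : PMF ℕ) (s : ℝ≥0∞) : ℝ≥0∞ := ∑' n : ℕ, p n * s ^ n

lemma pgfE_pure (n : ℕ) (s : ℝ≥0∞) : pgfE (PMF.pure n) s = s ^ n := by
  unfold pgfE
  rw [tsum_eq_single n]
  · simp [PMF.pure_apply]
  · intro k hk; simp [PMF.pure_apply, hk]

lemma pgfE_bind {α : Type*} (p : PMF α) (f : α → PMF ℕ) (s : ℝ≥0∞) :
    pgfE (p.bind f) s = ∑' a, p a * pgfE (f a) s := by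
  unfold pgfE
  simp only [PMF.bind_apply]
  calc ∑' n, (∑' a, p a * (f a) n) * s ^ n
      = ∑' (n : ℕ) (a : α), p a * ((f a) n * s ^ n) := by
        simp only [← ENNReal.tsum_mul_right, mul_assoc]
    _ = ∑' (a : α) (n : ℕ), p a * ((f a) n * s ^ n) := ENNReal.tsum_comm
    _ = ∑' a, p a * ∑' n, (f a) n * s ^ n := by
        simp only [ENNReal.tsum_mul_left]

lemma pgfE_map {α : Type*} (p : PMF α) (g : α → ℕ) (s : ℝ≥0∞) :
    pgfE (p.map g) s = ∑' a, p a * s ^ (g a) := by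
  rw [PMF.map, pgfE_bind]
  simp [pgfE_pure]

lemma pgfE_conv (p q : PMF ℕ) (s : ℝ≥0∞) :
    pgfE (pmfConv p q) s = pgfE p s * pgfE q s := by
  rw [pmfConv, pgfE_bind]
  have : ∀ a : ℕ, pgfE (q.map fun b => a + b) s = s ^ a * pgfE q s := by
    intro a
    rw [pgfE_map]
    rw [pgfE, ← ENNReal.tsum_mul_left]
    congr 1; funext b
    rw [pow_add]; ring
  simp only [this]
  unfold pgfE
  rw [← ENNReal.tsum_mul_right]
  congr 1; funext a; ring

lemma pgfE_bernNat {t : ℝ} (h1 : t ≤ 1) (s : ℝ≥0∞) :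
    pgfE (bernNat t) s = (1 - ENNReal.ofReal t) + ENNReal.ofReal t * s := by
  have hmin : min (Real.toNNReal t) 1 = Real.toNNReal t :=
    min_eq_left (by simpa using h1)
  rw [bernNat, pgfE_map, tsum_bool]
  simp [hmin, ENNReal.ofReal, PMF.bernoulli_apply]

lemma pgfE_bernSum {t : ℝ} (h1 : t ≤ 1) (n : ℕ) (s : ℝ≥0∞) :
    pgfE (bernSum t n) s = ((1 - ENNReal.ofReal t) + ENNReal.ofReal t * s) ^ n := by
  induction n with
  | zero => rw [bernSum, pgfE_pure, pow_zero, pow_zero]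
  | succ n ih => rw [bernSum, pgfE_conv, ih, pgfE_bernNat h1, pow_succ]

lemma pgfE_thin {t : ℝ} (h1 : t ≤ 1) (p : PMF ℕ) (s : ℝ≥0∞) :
    pgfE (pmfThin t p) s = pgfE p ((1 - ENNReal.ofReal t) + ENNReal.ofReal t * s) := by
  rw [pmfThin, pgfE_bind]
  simp only [pgfE_bernSum h1]
  rfl

lemma pgfE_le_one (p : PMF ℕ) {s : ℝ≥0∞} (hs : s ≤ 1) : pgfE p s ≤ 1 := by
  calc pgfE p s ≤ ∑' n, p n := by
        refine ENNReal.tsum_le_tsum fun n => ?_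
        calc p n * s ^ n ≤ p n * 1 ^ n := by
              gcongr
          _ = p n := by simp
    _ = 1 := p.tsum_coe

lemma pgfE_ne_top (p : PMF ℕ) {s : ℝ≥0∞} (hs : s ≤ 1) : pgfE p s ≠ ⊤ :=
  fun h => by simpa [h] using pgfE_le_one p hs

lemma pgf_eq (p : PMF ℕ) {s : ℝ} (h0 : 0 ≤ s) :
    pgf p s = (pgfE p (ENNReal.ofReal s)).toReal := by
  rw [pgfE, ENNReal.tsum_toReal_eq (fun n => by
    exact ENNReal.mul_ne_top (p.apply_ne_top n) (ENNReal.pow_ne_top ENNReal.ofReal_ne_top))]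
  unfold pgf
  congr 1; funext n
  rw [ENNReal.toReal_mul, ENNReal.toReal_pow, ENNReal.toReal_ofReal h0]

lemma pgf_conv (p q : PMF ℕ) {s : ℝ} (h0 : 0 ≤ s) :
    pgf (pmfConv p q) s = pgf p s * pgf q s := by
  rw [pgf_eq _ h0, pgf_eq _ h0, pgf_eq _ h0, pgfE_conv, ENNReal.toReal_mul]

lemma pgf_thin {t s : ℝ} (ht0 : 0 ≤ t) (ht1 : t ≤ 1) (h0 : 0 ≤ s) (p : PMF ℕ) :
    pgf (pmfThin t p) s = pgf p (1 - t + t * s) := by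
  have h2 : (0:ℝ) ≤ 1 - t + t * s := by nlinarith
  rw [pgf_eq _ h0, pgf_eq _ h2, pgfE_thin ht1]
  congr 2
  rw [ENNReal.ofReal_add (by linarith) (by positivity), ENNReal.ofReal_sub _ ht0,
    ENNReal.ofReal_one, ENNReal.ofReal_mul ht0]

lemma pgf_one (p : PMF ℕ) : pgf p 1 = 1 := by
  rw [pgf_eq _ zero_le_one, ENNReal.ofReal_one]
  have : pgfE p 1 = 1 := by
    rw [pgfE]; simp [p.tsum_coe]
  rw [this, ENNReal.toReal_one]

lemma pgf_nonneg (p : PMF ℕ) {s : ℝ} (h0 : 0 ≤ s) : 0 ≤ pgf p s := by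
  rw [pgf_eq _ h0]; exact ENNReal.toReal_nonneg

lemma pgf_le_one (p : PMF ℕ) {s : ℝ} (h0 : 0 ≤ s) (h1 : s ≤ 1) : pgf p s ≤ 1 := by
  rw [pgf_eq _ h0]
  have := pgfE_le_one p (s := ENNReal.ofReal s) (ENNReal.ofReal_le_one.mpr h1)
  calc (pgfE p (ENNReal.ofReal s)).toReal ≤ (1:ℝ≥0∞).toReal :=
        ENNReal.toReal_mono ENNReal.one_ne_top this
    _ = 1 := ENNReal.toReal_one

lemma pgf_zero (p : PMF ℕ) : pgf p 0 = (p 0).toReal := by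
  rw [pgf]
  rw [tsum_eq_single 0 (fun n hn => by simp [zero_pow hn])]
  simp

lemma summable_pgf (p : PMF ℕ) {s : ℝ} (h0 : 0 ≤ s) (h1 : s ≤ 1) :
    Summable (fun n => (p n).toReal * s ^ n) := by
  refine Summable.of_nonneg_of_le (fun n => by positivity) (fun n => ?_)
    (ENNReal.summable_toReal (by rw [p.tsum_coe]; exact ENNReal.one_ne_top))
  calc (p n).toReal * s ^ n ≤ (p n).toReal * 1 ^ n := by
        gcongr
    _ = (p n).toReal := by simp

lemma le_pgf (p : PMF ℕ) (k : ℕ) {s : ℝ} (h0 : 0 ≤ s) (h1 : s ≤ 1) :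
    (p k).toReal * s ^ k ≤ pgf p s :=
  Summable.le_tsum (summable_pgf p h0 h1) k (fun n _ => by positivity)

lemma pgf_pos (p : PMF ℕ) {s : ℝ} (h0 : 0 < s) (h1 : s ≤ 1) : 0 < pgf p s := by
  obtain ⟨k, hk⟩ : ∃ k, p k ≠ 0 := by
    by_contra h
    push_neg at h
    have := p.tsum_coe
    simp [h] at this
  have h2 : 0 < (p k).toReal * s ^ k := by
    have : 0 < (p k).toReal := ENNReal.toReal_pos hk (p.apply_ne_top k)
    positivity
  exact h2.trans_le (le_pgf p k h0.le h1)

lemma pgf_def (p : PMF ℕ) (s : ℝ) : pgf p s = ∑' n : ℕ, (p n).toReal * s ^ n := rfl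

section seq
variable {a b : ℕ → ℝ}

lemma summable_aux (ha0 : ∀ n, 0 ≤ a n) (ha : Summable a) {s : ℝ} (h0 : 0 ≤ s) (h1 : s ≤ 1) :
    Summable (fun n => a n * s ^ n) := by
  refine Summable.of_nonneg_of_le (fun n => by have := ha0 n; positivity) (fun n => ?_) ha
  calc a n * s ^ n ≤ a n * 1 ^ n := by have := ha0 n; gcongr
    _ = a n := by simp

lemma tsum_split (ha0 : ∀ n, 0 ≤ a n) (ha : Summable a) {s : ℝ} (h0 : 0 ≤ s) (h1 : s ≤ 1) :
    ∑' n, a n * s ^ n = a 0 + s * ∑' n, a (n + 1) * s ^ n := by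
  rw [Summable.tsum_eq_zero_add (summable_aux ha0 ha h0 h1)]
  simp only [pow_zero, mul_one, pow_succ]
  rw [← tsum_mul_left]
  congr 1
  exact tsum_congr (fun n => by ring)

lemma tail_le (ha0 : ∀ n, 0 ≤ a n) (ha : Summable a) {s : ℝ} (h0 : 0 ≤ s) (h1 : s ≤ 1) :
    ∑' n, a (n + 1) * s ^ n ≤ ∑' n, a (n + 1) := by
  have ha' : Summable (fun n => a (n + 1)) := (summable_nat_add_iff 1).mpr ha
  refine Summable.tsum_le_tsum (fun n => ?_) (summable_aux (fun n => ha0 _) ha' h0 h1) ha'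
  calc a (n+1) * s ^ n ≤ a (n+1) * 1 ^ n := by have := ha0 (n+1); gcongr
    _ = a (n+1) := by simp

lemma tail_nonneg (ha0 : ∀ n, 0 ≤ a n) (ha : Summable a) {s : ℝ} (h0 : 0 ≤ s) :
    0 ≤ ∑' n, a (n + 1) * s ^ n :=
  tsum_nonneg (fun n => by have := ha0 (n+1); positivity)

lemma coeff_zero_le (ha0 : ∀ n, 0 ≤ a n) (hb0 : ∀ n, 0 ≤ b n)
    (ha : Summable a) (hb : Summable b)
    (h : ∀ s : ℝ, 0 < s → s < 1 → ∑' n, a n * s ^ n = ∑' n, b n * s ^ n) :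
    a 0 ≤ b 0 := by
  set B := ∑' n, b (n + 1) with hB
  have hBnn : 0 ≤ B := tsum_nonneg (fun n => hb0 _)
  refine le_of_forall_pos_le_add (fun ε hε => ?_)
  set s : ℝ := min (1/2) (ε / (B + 1)) with hs
  have hs0 : 0 < s := lt_min (by norm_num) (by positivity)
  have hs1 : s < 1 := lt_of_le_of_lt (min_le_left _ _) (by norm_num)
  have key : a 0 ≤ b 0 + s * B := by
    calc a 0 ≤ a 0 + s * ∑' n, a (n + 1) * s ^ n := by
          have := tail_nonneg ha0 ha hs0.le
          nlinarith
      _ = ∑' n, a n * s ^ n := (tsum_split ha0 ha hs0.le hs1.le).symm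
      _ = ∑' n, b n * s ^ n := h s hs0 hs1
      _ = b 0 + s * ∑' n, b (n + 1) * s ^ n := tsum_split hb0 hb hs0.le hs1.le
      _ ≤ b 0 + s * B := by
          have := tail_le hb0 hb hs0.le hs1.le
          nlinarith
  have : s * B ≤ ε := by
    have h1 : s ≤ ε / (B + 1) := min_le_right _ _
    calc s * B ≤ ε / (B + 1) * B := by gcongr
      _ ≤ ε := by
          rw [div_mul_eq_mul_div, div_le_iff₀ (by positivity)]
          nlinarith
  linarith

lemma coeff_eq (k : ℕ) : ∀ (a b : ℕ → ℝ), (∀ n, 0 ≤ a n) → (∀ n, 0 ≤ b n) →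
    Summable a → Summable b →
    (∀ s : ℝ, 0 < s → s < 1 → ∑' n, a n * s ^ n = ∑' n, b n * s ^ n) →
    a k = b k := by
  induction k with
  | zero =>
    intro a b ha0 hb0 ha hb h
    exact le_antisymm (coeff_zero_le ha0 hb0 ha hb h)
      (coeff_zero_le hb0 ha0 hb ha (fun s h0 h1 => (h s h0 h1).symm))
  | succ k ih =>
    intro a b ha0 hb0 ha hb h
    have h0 : a 0 = b 0 := le_antisymm (coeff_zero_le ha0 hb0 ha hb h)
      (coeff_zero_le hb0 ha0 hb ha (fun s h0 h1 => (h s h0 h1).symm))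
    have ha' : Summable (fun n => a (n + 1)) := (summable_nat_add_iff 1).mpr ha
    have hb' : Summable (fun n => b (n + 1)) := (summable_nat_add_iff 1).mpr hb
    exact ih (fun n => a (n + 1)) (fun n => b (n + 1)) (fun n => ha0 _) (fun n => hb0 _)
      ha' hb' (fun s hs0 hs1 => by
        have := h s hs0 hs1
        rw [tsum_split ha0 ha hs0.le hs1.le, tsum_split hb0 hb hs0.le hs1.le, h0] at this
        have := add_left_cancel this
        exact mul_left_cancel₀ hs0.ne' this)

lemma pgf_inj {p q : PMF ℕ} (h : ∀ s : ℝ, 0 < s → s < 1 → pgf p s = pgf q s) : p = q := by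
  have hsum : ∀ r : PMF ℕ, Summable (fun n => (r n).toReal) := fun r =>
    ENNReal.summable_toReal (by rw [r.tsum_coe]; exact ENNReal.one_ne_top)
  have := coeff_eq (a := fun n => (p n).toReal) (b := fun n => (q n).toReal)
  ext n
  have hn := fun k => coeff_eq k (fun n => (p n).toReal) (fun n => (q n).toReal)
    (fun n => ENNReal.toReal_nonneg) (fun n => ENNReal.toReal_nonneg) (hsum p) (hsum q)
    (fun s h0 h1 => by rw [← pgf_def, ← pgf_def]; exact h s h0 h1)
  exact (ENNReal.toReal_eq_toReal_iff' (p.apply_ne_top n) (q.apply_ne_top n)).mp (hn n)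

lemma pgf_poisson (r : ℝ≥0) (s : ℝ) :
    pgf (poissonPMF r) s = Real.exp (r * (s - 1)) := by
  have happ : ∀ n, (poissonPMF r n).toReal = poissonPMFReal r n := fun n => by
    rw [show poissonPMF r n = ENNReal.ofReal (poissonPMFReal r n) from rfl,
      ENNReal.toReal_ofReal poissonPMFReal_nonneg]
  have hsum : HasSum (fun n => Real.exp (-(r:ℝ)) * (((r:ℝ) * s) ^ n / n.factorial))
      (Real.exp (-(r:ℝ)) * Real.exp ((r:ℝ) * s)) := by
    have := NormedSpace.expSeries_div_hasSum_exp ((r:ℝ) * s)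
    rw [← Real.exp_eq_exp_ℝ] at this
    exact this.mul_left _
  have : pgf (poissonPMF r) s = Real.exp (-(r:ℝ)) * Real.exp ((r:ℝ) * s) := by
    rw [pgf, ← hsum.tsum_eq]
    refine tsum_congr fun n => ?_
    rw [happ, poissonPMFReal, mul_pow]
    ring
  rw [this, ← Real.exp_add]
  congr 1
  ring

noncomputable def clamp01 (x : ℝ) : ℝ := max 0 (min 1 x)

lemma clamp01_def (x : ℝ) : clamp01 x = max 0 (min 1 x) := rfl

lemma continuous_clamp01 : Continuous clamp01 := by
  unfold clamp01; fun_prop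

lemma clamp01_eq {x : ℝ} (h0 : 0 ≤ x) (h1 : x ≤ 1) : clamp01 x = x := by
  rw [clamp01, min_eq_right h1, max_eq_right h0]

lemma clamp01_mem (x : ℝ) : 0 ≤ clamp01 x ∧ clamp01 x ≤ 1 :=
  ⟨le_max_left _ _, max_le (by norm_num) (min_le_left _ _)⟩

lemma continuous_pgf_clamp (p : PMF ℕ) : Continuous (fun x => pgf p (1 - clamp01 x)) := by
  show Continuous (fun x => ∑' n : ℕ, (p n).toReal * (1 - clamp01 x) ^ n)
  refine continuous_tsum (f := fun n x => (p n).toReal * (1 - clamp01 x) ^ n)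
    (u := fun n => (p n).toReal) (fun n => by
      exact (continuous_const.mul ((continuous_const.sub continuous_clamp01).pow n)))
    (ENNReal.summable_toReal (by rw [p.tsum_coe]; exact ENNReal.one_ne_top))
    (fun n x => ?_)
  obtain ⟨h0, h1⟩ := clamp01_mem x
  have hb0 : (0:ℝ) ≤ 1 - clamp01 x := by linarith
  have hb1 : 1 - clamp01 x ≤ 1 := by linarith
  rw [Real.norm_eq_abs, abs_of_nonneg (by positivity)]
  calc (p n).toReal * (1 - clamp01 x) ^ n ≤ (p n).toReal * 1 ^ n := by gcongr
    _ = (p n).toReal := by simp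

/-- A `ℕ`-valued random variable is discrete `1`-stable, i.e. `t ∘ ξ' + (1-t) ∘ ξ'' =_d ξ`
for all `t ∈ [0,1]` with independent copies `ξ', ξ''`, if and only if it is Poisson
distributed with some mean `λ ≥ 0`. -/
theorem discrete_one_stable_iff_poisson (p : PMF ℕ) :
    (∀ t : ℝ, 0 ≤ t → t ≤ 1 → pmfConv (pmfThin t p) (pmfThin (1 - t) p) = p) ↔
    ∃ lam : ℝ≥0, p = poissonPMF lam := by
  constructor
  · intro H
    -- the key functional equation
    have key : ∀ t s : ℝ, 0 ≤ t → t ≤ 1 → 0 ≤ s → s ≤ 1 →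
        pgf p (1 - t + t * s) * pgf p (1 - (1 - t) + (1 - t) * s) = pgf p s := by
      intro t s ht0 ht1 hs0 hs1
      have := congrArg (fun q => pgf q s) (H t ht0 ht1)
      rw [pgf_conv _ _ hs0, pgf_thin ht0 ht1 hs0, pgf_thin (by linarith) (by linarith) hs0]
        at this
      exact this
    set φ : ℝ → ℝ := fun u => pgf p (1 - u) with hφ
    have φ_def : ∀ u : ℝ, φ u = pgf p (1 - u) := fun u => rfl
    have φ0 : φ 0 = 1 := by rw [φ_def]; norm_num [pgf_one]
    have φ1 : φ 1 = (p 0).toReal := by rw [φ_def]; norm_num [pgf_zero]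
    have mult : ∀ x y : ℝ, 0 ≤ x → 0 ≤ y → x + y ≤ 1 → φ x * φ y = φ (x + y) := by
      intro x y hx hy hxy
      rcases eq_or_lt_of_le (by linarith : (0:ℝ) ≤ x + y) with h | h
      · have hx0 : x = 0 := by linarith
        have hy0 : y = 0 := by linarith
        simp [hx0, hy0, φ0]
      · have hu : x + y ≠ 0 := h.ne'
        have ht0 : 0 ≤ x / (x + y) := by positivity
        have ht1 : x / (x + y) ≤ 1 := by
          rw [div_le_one h]; linarith
        have hs0 : (0:ℝ) ≤ 1 - (x + y) := by linarith
        have hs1 : 1 - (x + y) ≤ 1 := by linarith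
        have := key (x / (x + y)) (1 - (x + y)) ht0 ht1 hs0 hs1
        have e1 : 1 - x / (x + y) + x / (x + y) * (1 - (x + y)) = 1 - x := by
          field_simp; ring
        have e2 : 1 - (1 - x / (x + y)) + (1 - x / (x + y)) * (1 - (x + y)) = 1 - y := by
          field_simp; ring
        rw [e1, e2] at this
        rw [φ_def, φ_def, φ_def]
        convert this using 3 <;> ring
    have p0pos : 0 < (p 0).toReal := by
      have h2 := mult (1/2) (1/2) (by norm_num) (by norm_num) (by norm_num)
      have hpos : 0 < φ (1/2) := by
        rw [φ_def]; exact pgf_pos p (by norm_num) (by norm_num)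
      rw [show (1:ℝ)/2 + 1/2 = 1 by norm_num, φ1] at h2
      nlinarith
    have p0le1 : (p 0).toReal ≤ 1 := by
      rw [← pgf_zero]; exact pgf_le_one p le_rfl zero_le_one
    set c : ℝ := Real.log ((p 0).toReal) with hc
    have hcle : c ≤ 0 := Real.log_nonpos p0pos.le p0le1
    have hexpc : Real.exp c = (p 0).toReal := Real.exp_log p0pos
    have φpos : ∀ u : ℝ, 0 ≤ u → u ≤ 1 → 0 < φ u := by
      intro u h0 h1
      have hm := mult u (1 - u) h0 (by linarith) (by linarith)
      rw [show u + (1 - u) = 1 by ring, φ1] at hm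
      have h2 : 0 ≤ φ u := by rw [φ_def]; exact pgf_nonneg p (by linarith)
      have h3 : 0 ≤ φ (1 - u) := by rw [φ_def]; exact pgf_nonneg p (by linarith)
      rcases h2.lt_or_eq with h | h
      · exact h
      · exfalso; rw [← h] at hm; simp at hm; linarith
    -- φ(k/n) = φ(1/n)^k
    have step1 : ∀ n : ℕ, 0 < n → ∀ k : ℕ, k ≤ n → φ ((k : ℝ) / n) = φ (1 / n) ^ k := by
      intro n hn
      intro k
      induction k with
      | zero => intro _; simpa using φ0
      | succ k ih =>
        intro hk
        have hk' : k ≤ n := le_of_lt (Nat.lt_of_succ_le hk)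
        have hnR : (0:ℝ) < n := by exact_mod_cast hn
        have hm := mult ((k : ℝ) / n) (1 / n) (by positivity) (by positivity)
          (by
            rw [← add_div, div_le_one hnR]
            push_cast
            exact_mod_cast (by exact_mod_cast hk : ((k:ℝ) + 1) ≤ n))
        rw [← add_div] at hm
        rw [show ((k:ℝ) + 1) = ((k + 1 : ℕ) : ℝ) by push_cast; ring] at hm
        rw [← hm, ih hk', pow_succ]
    have step3 : ∀ n : ℕ, 0 < n → φ (1 / n) = Real.exp (c / n) := by
      intro n hn
      have hnR : (0:ℝ) < n := by exact_mod_cast hn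
      have h := step1 n hn n le_rfl
      rw [div_self hnR.ne'] at h
      have hppos : 0 < φ (1 / n) := φpos _ (by positivity) (by
        rw [div_le_one hnR]; exact_mod_cast hn)
      have hlog : (n : ℝ) * Real.log (φ (1 / n)) = c := by
        rw [← Real.log_pow, ← h, φ1, hc]
      have : Real.log (φ (1 / n)) = c / n := by
        field_simp at hlog ⊢; linarith
      rw [← Real.exp_log hppos, this]
    have ratval : ∀ n : ℕ, 0 < n → ∀ k : ℕ, k ≤ n →
        φ ((k : ℝ) / n) = Real.exp (c * ((k : ℝ) / n)) := by
      intro n hn k hk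
      rw [step1 n hn k hk, step3 n hn, ← Real.exp_nat_mul]
      congr 1
      field_simp
    have ratQ : ∀ q : ℚ, 0 ≤ q → q ≤ 1 → φ (q : ℝ) = Real.exp (c * (q : ℝ)) := by
      intro q hq0 hq1
      have hnum : 0 ≤ q.num := Rat.num_nonneg.mpr hq0
      set k : ℕ := q.num.toNat with hk
      set n : ℕ := q.den with hn
      have hnpos : 0 < n := q.pos
      have hcast : (q : ℝ) = (k : ℝ) / n := by
        rw [Rat.cast_def]
        congr 1
        · exact_mod_cast congrArg (Int.cast : ℤ → ℝ) (Int.toNat_of_nonneg hnum).symm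
      have hkn : k ≤ n := by
        have hq1' : (q : ℝ) ≤ 1 := by exact_mod_cast hq1
        rw [hcast, div_le_one (by exact_mod_cast hnpos)] at hq1'
        exact_mod_cast hq1'
      rw [hcast]
      exact ratval n hnpos k hkn
    -- glue by continuity
    have glue : ∀ u : ℝ, 0 ≤ u → u ≤ 1 → φ u = Real.exp (c * u) := by
      have hF : (fun x => pgf p (1 - clamp01 x)) = fun x => Real.exp (c * clamp01 x) := by
        refine Continuous.ext_on (Rat.denseRange_cast (𝕜 := ℝ))
          (continuous_pgf_clamp p)
          (Real.continuous_exp.comp (continuous_const.mul continuous_clamp01)) ?_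
        rintro x ⟨q, rfl⟩
        have h1 : clamp01 (q : ℝ) = ((max 0 (min 1 q) : ℚ) : ℝ) := by
          rw [clamp01_def]
          push_cast
          rfl
        have h0 : (0:ℚ) ≤ max 0 (min 1 q) := le_max_left _ _
        have h1' : max 0 (min 1 q) ≤ 1 := max_le (by norm_num) (min_le_left _ _)
        show pgf p (1 - clamp01 (q:ℝ)) = Real.exp (c * clamp01 (q:ℝ))
        rw [h1]
        exact ratQ _ h0 h1'
      intro u h0 h1
      have := congrFun hF u
      rw [clamp01_eq h0 h1] at this
      rw [φ_def]
      exact this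
    refine ⟨(⟨-c, by linarith⟩ : ℝ≥0), pgf_inj fun s h0 h1 => ?_⟩
    rw [pgf_poisson (⟨-c, by linarith⟩ : ℝ≥0)]
    have : pgf p s = φ (1 - s) := by rw [φ_def]; ring_nf
    rw [this, glue (1 - s) (by linarith) (by linarith)]
    congr 1
    show c * (1 - s) = (-c) * (s - 1)
    ring
  · rintro ⟨r, rfl⟩ t ht0 ht1
    refine pgf_inj fun s hs0 hs1 => ?_
    rw [pgf_conv _ _ hs0.le, pgf_thin ht0 ht1 hs0.le,
      pgf_thin (by linarith) (by linarith) hs0.le,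
      pgf_poisson, pgf_poisson, pgf_poisson, ← Real.exp_add]
    congr 1
    ring
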